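/- With the notation of the previous statement (unramified quadratic extension O ⊂ O', Hermitian space V, totally isotropic subspace E, and lattice Λ with Λ ⊆ Λ^∨ ⊆ ϖ^{-1}Λ), if moreover Λ = Λ^∨ (Λ is self-dual), then the induced lattice Λ' = (E^⊥ ∩ Λ)/(E ∩ Λ) in E^⊥/E is also self-dual: Λ' = (Λ')^∨. -/

import Mathlib

set_option linter.unusedVariables false


open Module

/-- Every linear functional on a finite-dimensional space with a nondegenerate
sesquilinear form is represented by pairing with a vector. -/
lemma dual_repr {F V : Type*} [Field F] [AddCommGroup V] [Module F V]
    [FiniteDimensional F V]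
    (σ : F ≃+* F) (hσinv : ∀ x, σ (σ x) = x)
    (φ : V →ₗ[F] V →ₛₗ[(σ : F →+* F)] F)
    (hnd : ∀ x : V, (∀ y : V, φ x y = 0) → x = 0)
    (f : Module.Dual F V) : ∃ w : V, ∀ y, φ y w = f y := by
  classical
  -- the pairing with a fixed second argument, as a linear functional
  let pair : V → Module.Dual F V := fun w =>
    { toFun := fun y => φ y w
      map_add' := fun a b => by simp only [map_add, LinearMap.add_apply]
      map_smul' := fun c a => by simp only [map_smul, LinearMap.smul_apply]; rfl }
  let S : Submodule F (Module.Dual F V) :=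
    { carrier := {g | ∃ w : V, ∀ y, φ y w = g y}
      add_mem' := by
        rintro a b ⟨wa, hwa⟩ ⟨wb, hwb⟩
        exact ⟨wa + wb, fun y => by
          rw [map_add, LinearMap.add_apply, hwa, hwb]⟩
      zero_mem' := ⟨0, fun y => by rw [map_zero, LinearMap.zero_apply]⟩
      smul_mem' := by
        rintro c g ⟨w, hw⟩
        refine ⟨σ c • w, fun y => by
          rw [map_smulₛₗ, hw, LinearMap.smul_apply]
          simp [hσinv, smul_eq_mul]⟩ }
  by_contra hns
  push_neg at hns
  have hfS : f ∉ S := by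
    intro hf
    obtain ⟨w, hw⟩ := hf
    obtain ⟨y, hy⟩ := hns w
    exact hy (hw y)
  obtain ⟨g, hg0, hgbot⟩ := S.exists_dual_map_eq_bot_of_notMem hfS inferInstance
  set v : V := (Module.evalEquiv F V).symm g with hv
  have hφv : ∀ w : V, φ v w = 0 := by
    intro w
    have hmem : pair w ∈ S := ⟨w, fun y => rfl⟩
    have : g (pair w) = 0 := by
      have : g (pair w) ∈ S.map g := ⟨pair w, hmem, rfl⟩
      rwa [hgbot, Submodule.mem_bot] at this
    have h2 : (pair w) v = g (pair w) :=
      Module.apply_evalEquiv_symm_apply F V (pair w) g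
    rw [this] at h2
    exact h2
  have hv0 : v = 0 := hnd v hφv
  have : g = 0 := by
    have := (Module.evalEquiv F V).apply_symm_apply g
    rw [← hv, hv0, map_zero] at this
    exact this.symm
  rw [this] at hg0
  exact hg0 (LinearMap.zero_apply f)


/-- Every vector in the `F`-span of an `O`-lattice has a nonzero "denominator". -/
lemma exists_denom {O F V : Type*} [CommRing O] [IsDomain O]
    [Field F] [Algebra O F] [IsFractionRing O F]
    [AddCommGroup V] [Module F V] [Module O V] [IsScalarTower O F V]
    (Λ : Submodule O V) (hfull : Submodule.span F (Λ : Set V) = ⊤)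
    (v : V) : ∃ c : O, c ≠ 0 ∧ c • v ∈ Λ := by
  have hv : v ∈ Submodule.span F (Λ : Set V) := hfull ▸ Submodule.mem_top
  induction hv using Submodule.span_induction with
  | mem x hx => exact ⟨1, one_ne_zero, by simpa using hx⟩
  | zero => exact ⟨1, one_ne_zero, by simp⟩
  | add x y _ _ hx hy =>
    obtain ⟨c, hc, hcx⟩ := hx
    obtain ⟨d, hd, hdy⟩ := hy
    refine ⟨c * d, mul_ne_zero hc hd, ?_⟩
    rw [smul_add]
    refine Submodule.add_mem _ ?_ ?_
    · rw [mul_comm, mul_smul]; exact Λ.smul_mem d hcx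
    · rw [mul_smul]; exact Λ.smul_mem c hdy
  | smul a x _ hx =>
    obtain ⟨c, hc, hcx⟩ := hx
    obtain ⟨⟨r, s⟩, hrs⟩ := IsLocalization.surj (nonZeroDivisors O) a
    refine ⟨(s : O) * c, mul_ne_zero (nonZeroDivisors.coe_ne_zero s) hc, ?_⟩
    have : ((s : O) * c) • (a • x) = r • (c • x) := by
      rw [← algebraMap_smul F ((s:O)*c) (a • x), ← algebraMap_smul F r (c • x),
        ← algebraMap_smul F c x, map_mul]
      simp only at hrs
      have h2 : (algebraMap O F (s : O) * algebraMap O F c * a)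
          = algebraMap O F r * algebraMap O F c := by
        linear_combination (algebraMap O F c) * hrs
      rw [smul_smul, smul_smul, h2]
    rw [this]
    exact Λ.smul_mem r hcx

/-- Lemma 3.1, second part.  Same setup as Statement 0: unramified
quadratic extension with integers `O`, Galois involution `σ`, nondegenerate Hermitian
space `(V, φ)`, totally isotropic subspace `E`, full-rank lattice `Λ`.  If moreover `Λ` is
self-dual (`Λ = Λ^∨`), then the induced lattice `Λ' = (E^⊥ ∩ Λ)/(E ∩ Λ)` in `E^⊥/E` is
also self-dual.  In terms of representatives in `E^⊥ = {x | ∀ y ∈ E, φ x y = 0}`: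
(a) `Λ' ⊆ Λ'^∨`, and (b) `Λ'^∨ ⊆ Λ'`: any `x ∈ E^⊥` pairing integrally with `E^⊥ ∩ Λ`
satisfies `x ∈ (E^⊥ ∩ Λ) + E`. -/
theorem stmt1
    {O F V : Type*} [CommRing O] [IsDomain O] [IsDiscreteValuationRing O]
    [IsAdicComplete (IsLocalRing.maximalIdeal O) O]
    [Field F] [Algebra O F] [IsFractionRing O F]
    (ϖ : O) (hϖ : Irreducible ϖ)
    (σ : F ≃+* F) (hσinv : ∀ x, σ (σ x) = x)
    (hσO : ∀ a : O, σ (algebraMap O F a) ∈ (algebraMap O F).range)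
    [AddCommGroup V] [Module F V] [FiniteDimensional F V]
    [Module O V] [IsScalarTower O F V]
    (φ : V →ₗ[F] V →ₛₗ[(σ : F →+* F)] F)
    (hherm : ∀ x y : V, φ x y = σ (φ y x))
    (hnd : ∀ x : V, (∀ y : V, φ x y = 0) → x = 0)
    (Λ : Submodule O V) (hfg : Λ.FG)
    (hfull : Submodule.span F (Λ : Set V) = ⊤)
    -- `Λ ⊆ Λ^∨` :
    (hint : ∀ x ∈ Λ, ∀ y ∈ Λ, φ x y ∈ (algebraMap O F).range)
    -- `Λ^∨ ⊆ Λ`, so that together with `hint`, `Λ = Λ^∨` is self-dual: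
    (hsd : ∀ x : V, (∀ y ∈ Λ, φ x y ∈ (algebraMap O F).range) → x ∈ Λ)
    (E : Subspace F V) (hiso : ∀ x ∈ E, ∀ y ∈ E, φ x y = 0) :
    -- (a)  `Λ' ⊆ Λ'^∨`
    (∀ x : V, x ∈ Λ → (∀ e ∈ E, φ x e = 0) →
      ∀ y : V, y ∈ Λ → (∀ e ∈ E, φ y e = 0) →
        φ x y ∈ (algebraMap O F).range) ∧
    -- (b)  `Λ'^∨ ⊆ Λ'`
    (∀ x : V, (∀ e ∈ E, φ x e = 0) →
      (∀ y : V, y ∈ Λ → (∀ e ∈ E, φ y e = 0) → φ x y ∈ (algebraMap O F).range) →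
      ∃ z : V, z ∈ Λ ∧ (∀ e ∈ E, φ z e = 0) ∧ ∃ e ∈ E, x = z + e) := by
  
  classical
  have hinj : Function.Injective (algebraMap O F) := IsFractionRing.injective O F
  have hσrange : ∀ a : F, a ∈ (algebraMap O F).range → σ a ∈ (algebraMap O F).range := by
    rintro a ⟨b, rfl⟩; exact hσO b
  refine ⟨fun x hx _ y hy _ => hint x hx y hy, ?_⟩
  intro x hxE hxint
  -- instances on Λ
  haveI hnzV : NoZeroSMulDivisors O V := by
    constructor
    intro c v h
    rw [← algebraMap_smul F c v] at h
    rcases smul_eq_zero.mp h with h | h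
    · exact Or.inl (hinj (by rwa [map_zero]))
    · exact Or.inr h
  haveI : Module.Finite O Λ := Module.Finite.iff_fg.mpr hfg
  haveI : Module.Free O Λ := Module.free_of_finite_type_torsion_free'
  -- E^⊥ as a subspace
  let Eperp : Submodule F V :=
    { carrier := {v | ∀ e ∈ E, φ v e = 0}
      add_mem' := fun {a b} ha hb e he => by
        rw [map_add, LinearMap.add_apply, ha e he, hb e he, add_zero]
      zero_mem' := fun e he => by rw [map_zero, LinearMap.zero_apply]
      smul_mem' := fun c v hv e he => by
        rw [map_smul, LinearMap.smul_apply, hv e he, smul_zero] }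
  -- the sublattice Λ ∩ E^⊥, inside Λ
  let Mc : Submodule O Λ := (Eperp.restrictScalars O).comap Λ.subtype
  have hMc : ∀ y : Λ, y ∈ Mc ↔ (∀ e ∈ E, φ (y : V) e = 0) := fun y => Iff.rfl
  -- the quotient is torsion-free, hence free, hence the inclusion splits
  haveI : NoZeroSMulDivisors O (Λ ⧸ Mc) := by
    constructor
    intro c q h
    by_cases hc : c = 0
    · exact Or.inl hc
    · right
      obtain ⟨y, rfl⟩ := Submodule.mkQ_surjective Mc q
      rw [← map_smul, Submodule.mkQ_apply, Submodule.Quotient.mk_eq_zero] at h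
      rw [Submodule.mkQ_apply, Submodule.Quotient.mk_eq_zero]
      rw [hMc] at h ⊢
      intro e he
      have := h e he
      have hcoe : ((c • y : Λ) : V) = algebraMap O F c • (y : V) := by
        rw [Submodule.coe_smul, algebraMap_smul]
      rw [hcoe, map_smul, LinearMap.smul_apply, smul_eq_mul, mul_eq_zero] at this
      rcases this with h' | h'
      · exact absurd (hinj (by rwa [map_zero])) hc
      · exact h'
  haveI : Module.Free O (Λ ⧸ Mc) := Module.free_of_finite_type_torsion_free'
  obtain ⟨s, hs⟩ := Module.projective_lifting_property Mc.mkQ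
    (LinearMap.id : (Λ ⧸ Mc) →ₗ[O] (Λ ⧸ Mc)) (Submodule.mkQ_surjective Mc)
  have hs' : ∀ q, Mc.mkQ (s q) = q := fun q => by
    have := LinearMap.ext_iff.mp hs q
    simpa using this
  -- retraction onto Mc
  let r : Λ →ₗ[O] Λ := LinearMap.id - s ∘ₗ Mc.mkQ
  have hrM : ∀ y : Λ, r y ∈ Mc := by
    intro y
    have : Mc.mkQ (r y) = 0 := by
      simp only [r, LinearMap.sub_apply, LinearMap.id_apply, LinearMap.comp_apply,
        map_sub, hs']
      exact sub_self _
    rwa [Submodule.mkQ_apply, Submodule.Quotient.mk_eq_zero] at this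
  have hrId : ∀ y : Λ, y ∈ Mc → r y = y := by
    intro y hy
    have h0 : Mc.mkQ y = 0 := by rwa [Submodule.mkQ_apply, Submodule.Quotient.mk_eq_zero]
    simp only [r, LinearMap.sub_apply, LinearMap.id_apply, LinearMap.comp_apply, h0,
      map_zero, sub_zero]
  -- pairing with x on the left, as a linear functional
  let px : V →ₗ[F] F :=
    { toFun := fun y => φ y x
      map_add' := fun a b => by simp only [map_add, LinearMap.add_apply]
      map_smul' := fun c a => by simp only [map_smul, LinearMap.smul_apply]; rfl }
  let Hl : Λ →ₗ[O] F := (px.restrictScalars O) ∘ₗ (Λ.subtype ∘ₗ r)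
  have hHlval : ∀ y : Λ, Hl y ∈ (algebraMap O F).range := by
    intro y
    have h1 : ((r y : Λ) : V) ∈ Λ := SetLike.coe_mem _
    have h2 := hxint ((r y : Λ) : V) h1 ((hMc _).mp (hrM y))
    have : Hl y = σ (φ x ((r y : Λ) : V)) := hherm _ _
    rw [this]
    exact hσrange _ h2
  have hHlE : ∀ y : Λ, y ∈ Mc → Hl y = φ (y : V) x := by
    intro y hy
    show px (Λ.subtype (r y)) = φ (y : V) x
    rw [hrId y hy]
    rfl
  -- an O-basis of Λ is an F-basis of V
  let b := Module.Free.chooseBasis O Λ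
  let bv : Module.Free.ChooseBasisIndex O Λ → V := fun i => (b i : V)
  have hli_O : LinearIndependent O bv :=
    b.linearIndependent.map' Λ.subtype (Submodule.ker_subtype Λ)
  have hli : LinearIndependent F bv := hli_O.localization F (nonZeroDivisors O)
  have hspan : ⊤ ≤ Submodule.span F (Set.range bv) := by
    rw [← hfull]
    refine Submodule.span_le.mpr ?_
    intro v hv
    have h1 : (⟨v, hv⟩ : Λ) ∈ Submodule.span O (Set.range ⇑b) := by
      rw [b.span_eq]; trivial
    have h2 : v ∈ Submodule.map Λ.subtype (Submodule.span O (Set.range ⇑b)) :=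
      ⟨⟨v, hv⟩, h1, rfl⟩
    rw [Submodule.map_span, ← Set.range_comp] at h2
    have h3 : v ∈ Submodule.span O (Set.range bv) := h2
    exact Submodule.span_subset_span O F _ h3
  let bV : Basis (Module.Free.ChooseBasisIndex O Λ) F V := Basis.mk hli hspan
  let Hf : V →ₗ[F] F := bV.constr F (fun i => Hl (b i))
  have hHfb : ∀ i, Hf (bv i) = Hl (b i) := by
    intro i
    have h1 := bV.constr_basis F (fun i => Hl (b i)) i
    rwa [show bV i = bv i from Basis.mk_apply hli hspan i] at h1
  have hHfΛ : ∀ y : Λ, Hf (y : V) = Hl y := by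
    have : (Hf.restrictScalars O) ∘ₗ Λ.subtype = Hl := by
      refine b.ext fun i => ?_
      show Hf (b i : V) = Hl (b i)
      exact hHfb i
    intro y
    exact LinearMap.ext_iff.mp this y
  have hdenom : ∀ v : V, ∃ c : O, c ≠ 0 ∧ c • v ∈ Λ := exists_denom Λ hfull
  have hHfE : ∀ v : V, (∀ e ∈ E, φ v e = 0) → Hf v = φ v x := by
    intro v hv
    obtain ⟨c, hc, hcv⟩ := hdenom v
    have hmem : (⟨c • v, hcv⟩ : Λ) ∈ Mc := by
      rw [hMc]
      intro e he
      show φ (c • v) e = 0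
      rw [← algebraMap_smul F c v, map_smul, LinearMap.smul_apply, hv e he, smul_zero]
    have h1 : Hf (c • v) = φ (c • v) x := by
      have := hHfΛ ⟨c • v, hcv⟩
      rw [this]
      exact hHlE _ hmem
    rw [← algebraMap_smul F c v, map_smul, map_smul, LinearMap.smul_apply] at h1
    have hcne : algebraMap O F c ≠ 0 := fun h => hc (hinj (by rwa [map_zero]))
    rw [smul_eq_mul, smul_eq_mul] at h1
    exact mul_left_cancel₀ hcne h1
  have hHfint : ∀ y ∈ Λ, Hf y ∈ (algebraMap O F).range := by
    intro y hy
    rw [show Hf y = Hl ⟨y, hy⟩ from hHfΛ ⟨y, hy⟩]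
    exact hHlval _
  -- represent Hf by pairing with a vector w
  obtain ⟨w, hw⟩ := dual_repr σ hσinv φ hnd Hf
  have hwΛ : w ∈ Λ := by
    refine hsd w fun y hy => ?_
    rw [hherm w y, hw y]
    exact hσrange _ (hHfint y hy)
  have hpair : ∀ v : V, (∀ e ∈ E, φ v e = 0) → φ v (x - w) = 0 := by
    intro v hv
    rw [map_sub, hw v, hHfE v hv, sub_self]
  have hxwE : x - w ∈ E := by
    by_contra hmem
    obtain ⟨f, hf0, hfbot⟩ := E.exists_dual_map_eq_bot_of_notMem hmem inferInstance
    obtain ⟨u, hu⟩ := dual_repr σ hσinv φ hnd f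
    have huE : ∀ e ∈ E, φ u e = 0 := by
      intro e he
      have hfe : f e = 0 := by
        have : f e ∈ Submodule.map f E := ⟨e, he, rfl⟩
        rwa [hfbot, Submodule.mem_bot] at this
      rw [hherm u e, hu e, hfe, map_zero]
    have : f (x - w) = 0 := by
      rw [← hu, hherm (x - w) u, hpair u huE, map_zero]
    exact hf0 this
  have hwperp : ∀ e ∈ E, φ w e = 0 := by
    intro e he
    have h1 : φ x e = 0 := hxE e he
    have h2 : φ (x - w) e = 0 := hiso _ hxwE e he
    rw [map_sub, LinearMap.sub_apply, h1, zero_sub, neg_eq_zero] at h2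
    exact h2
  exact ⟨w, hwΛ, hwperp, x - w, hxwE, by abel⟩
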